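/- For an open convex cone T in a finite-dimensional real vector space V, and for all y in V and x in T, the gauge M_T(y/x) := inf{λ > 0 : λx − y ∈ closure(T)} satisfies M_T(y/x) = sup over z in the dual cone T* of ⟨z,y⟩/⟨z,x⟩. -/

import Mathlib

open Set Filter Topology

variable {V : Type*} [NormedAddCommGroup V] [NormedSpace ℝ V] [FiniteDimensional ℝ V]

/-- An open cone: non-empty, open, convex, invariant under positive scaling, not containing 0. -/
def IsOpenCone (T : Set V) : Prop :=
  T.Nonempty ∧ IsOpen T ∧ Convex ℝ T ∧ (∀ c : ℝ, 0 < c → ∀ u ∈ T, c • u ∈ T) ∧ (0 : V) ∉ T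

/-- The gauge `M_T(y/x) = inf {λ > 0 : λ • x - y ∈ closure T}`. -/
noncomputable def funkM (T : Set V) (y x : V) : ℝ :=
  sInf {l : ℝ | 0 < l ∧ l • x - y ∈ closure T}

/-- The Funk metric `F_T(x,y) = log inf {λ > 0 : λ • y - x ∈ closure T}`. -/
noncomputable def funkF (T : Set V) (x y : V) : ℝ := Real.log (funkM T x y)

/-- The reverse Funk metric `r_T(x,y) = F_T(y,x)`. -/
noncomputable def revF (T : Set V) (x y : V) : ℝ := Real.log (funkM T y x)

/-- The Hilbert metric as the symmetrisation of the Funk metric. -/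
noncomputable def hilD (T : Set V) (x y : V) : ℝ := funkF T x y + revF T x y

/-- The dual cone, as a set of continuous linear functionals. -/
def dualCone (T : Set V) : Set (V →L[ℝ] ℝ) := {z | ∀ u ∈ T, 0 ≤ z u}

/-- The open tangent cone `τ(T,x) = {λ (w - x) : λ > 0, w ∈ T}`. -/
def openTangent (T : Set V) (x : V) : Set V :=
  {v | ∃ l : ℝ, 0 < l ∧ ∃ w ∈ T, v = l • (w - x)}

lemma zero_mem_closure_of_cone (T : Set V) (hT : IsOpenCone T) : (0 : V) ∈ closure T := by
  obtain ⟨w, hw⟩ := hT.1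
  have : Tendsto (fun t : ℝ => t • w) (𝓝[>] 0) (𝓝 (0 : V)) := by
    have h : Continuous fun t : ℝ => t • w := continuous_id.smul continuous_const
    have := h.tendsto 0
    simpa using this.mono_left nhdsWithin_le_nhds
  refine mem_closure_of_tendsto this ?_
  filter_upwards [self_mem_nhdsWithin] with t ht
  exact hT.2.2.2.1 t ht w hw

lemma dual_nonneg_closure (T : Set V) {z : V →L[ℝ] ℝ} (hz : z ∈ dualCone T)
    {v : V} (hv : v ∈ closure T) : 0 ≤ z v := by
  have : closure T ⊆ z ⁻¹' (Ici 0) := by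
    apply closure_minimal (fun u hu => hz u hu)
    exact (isClosed_Ici).preimage z.continuous
  exact this hv

lemma dual_eq_zero_of_apply_eq_zero (T : Set V) (hT : IsOpenCone T)
    {z : V →L[ℝ] ℝ} (hz : z ∈ dualCone T) {x : V} (hx : x ∈ T) (hzx : z x = 0) :
    z = 0 := by
  obtain ⟨ε, hε, hball⟩ := Metric.isOpen_iff.1 hT.2.1 x hx
  ext v
  have key : ∀ u : V, ‖u‖ < ε → 0 ≤ z u := by
    intro u hu
    have : x + u ∈ T := hball (by simpa [dist_eq_norm] using hu)
    have := hz _ this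
    simpa [hzx] using this
  by_contra hv
  have hv0 : v ≠ 0 := by rintro rfl; simp at hv
  have hnv : 0 < ‖v‖ := norm_pos_iff.2 hv0
  set δ : ℝ := ε / (2 * ‖v‖) with hδ
  have hδpos : 0 < δ := div_pos hε (by nlinarith)
  have hnorm : ‖δ • v‖ < ε := by
    rw [norm_smul, Real.norm_eq_abs, abs_of_pos hδpos, hδ, div_mul_eq_mul_div,
      div_lt_iff₀ (by nlinarith)]
    nlinarith
  have h1 := key (δ • v) hnorm
  have h2 := key (-(δ • v)) (by simpa using hnorm)
  simp only [map_smul, map_neg, smul_eq_mul] at h1 h2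
  have : z v = 0 := by nlinarith
  exact hv this

lemma exists_dual_neg (T : Set V) (hT : IsOpenCone T) {p : V} (hp : p ∉ closure T) :
    ∃ z : V →L[ℝ] ℝ, z ∈ dualCone T ∧ z p < 0 := by
  obtain ⟨f, u, hfp, hfs⟩ :=
    geometric_hahn_banach_point_closed (hT.2.2.1.closure) isClosed_closure hp
  have hu0 : u < 0 := by
    have := hfs 0 (zero_mem_closure_of_cone T hT)
    simpa using this
  refine ⟨f, ?_, lt_trans hfp hu0⟩
  intro w hw
  by_contra hneg
  push_neg at hneg
  set t : ℝ := (u - 1) / f w with ht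
  have htpos : 0 < t := div_pos_of_neg_of_neg (by linarith) hneg
  have hmem : t • w ∈ T := hT.2.2.2.1 t htpos w hw
  have := hfs _ (subset_closure hmem)
  rw [map_smul, smul_eq_mul, ht, div_mul_cancel₀ _ (ne_of_lt hneg)] at this
  linarith


/-- dual formula for the gauge `M_T(y/x)`. -/
theorem funkM_eq_sSup_dual (T : Set V) (hT : IsOpenCone T) (y : V) (x : V) (hx : x ∈ T) :
    funkM T y x = sSup {r : ℝ | ∃ z : V →L[ℝ] ℝ, z ∈ dualCone T ∧ r = z y / z x} := by
  set S := {l : ℝ | 0 < l ∧ l • x - y ∈ closure T} with hS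
  set R := {r : ℝ | ∃ z : V →L[ℝ] ℝ, z ∈ dualCone T ∧ r = z y / z x} with hR
  -- S is nonempty
  obtain ⟨ε, hε, hball⟩ := Metric.isOpen_iff.1 hT.2.1 x hx
  have hSne : S.Nonempty := by
    set l : ℝ := ‖y‖ / ε + 1 with hl
    have hlpos : 0 < l := by positivity
    have hmem : x - l⁻¹ • y ∈ T := by
      apply hball
      rw [Metric.mem_ball, dist_eq_norm]
      have : x - l⁻¹ • y - x = -(l⁻¹ • y) := by abel
      rw [this, norm_neg, norm_smul, Real.norm_eq_abs, abs_of_pos (by positivity),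
        inv_mul_eq_div, div_lt_iff₀ hlpos, hl]
      have : ε * (‖y‖ / ε) = ‖y‖ := by field_simp
      nlinarith
    refine ⟨l, hlpos, subset_closure ?_⟩
    have := hT.2.2.2.1 l hlpos _ hmem
    rwa [smul_sub, smul_inv_smul₀ (ne_of_gt hlpos)] at this
  -- 0 ∈ R
  have hR0 : (0 : ℝ) ∈ R := ⟨0, fun u _ => le_refl 0, by simp⟩
  -- every element of R is ≤ every element of S
  have key : ∀ r ∈ R, ∀ l ∈ S, r ≤ l := by
    rintro r ⟨z, hz, rfl⟩ l ⟨hl, hmem⟩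
    by_cases hzx : z x = 0
    · have hz0 : z = 0 := dual_eq_zero_of_apply_eq_zero T hT hz hx hzx
      simp [hz0]
      exact hl.le
    · have hzx' : 0 < z x := lt_of_le_of_ne (hz x hx) (Ne.symm hzx)
      have h1 : 0 ≤ z (l • x - y) := dual_nonneg_closure T hz hmem
      rw [map_sub, map_smul, smul_eq_mul] at h1
      rw [div_le_iff₀ hzx']
      linarith
  obtain ⟨l₀, hl₀⟩ := hSne
  have hRbdd : BddAbove R := ⟨l₀, fun r hr => key r hr l₀ hl₀⟩
  have le₁ : sSup R ≤ sInf S :=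
    le_csInf ⟨l₀, hl₀⟩ fun l hl => csSup_le ⟨0, hR0⟩ fun r hr => key r hr l hl
  have le₂ : sInf S ≤ sSup R := by
    by_contra h
    push_neg at h
    have h0 : 0 ≤ sSup R := le_csSup hRbdd hR0
    set l : ℝ := (sSup R + sInf S) / 2 with hldef
    have hl1 : sSup R < l := by rw [hldef]; linarith
    have hl2 : l < sInf S := by rw [hldef]; linarith
    have hlpos : 0 < l := by linarith
    have hp : l • x - y ∉ closure T := by
      intro hc
      have : l ∈ S := ⟨hlpos, hc⟩
      have := csInf_le ⟨0, fun a ha => ha.1.le⟩ this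
      linarith
    obtain ⟨z, hz, hzneg⟩ := exists_dual_neg T hT hp
    have hzx : z x ≠ 0 := by
      intro h0'
      have := dual_eq_zero_of_apply_eq_zero T hT hz hx h0'
      rw [this] at hzneg
      simp at hzneg
    have hzx' : 0 < z x := lt_of_le_of_ne (hz x hx) (Ne.symm hzx)
    rw [map_sub, map_smul, smul_eq_mul, sub_neg] at hzneg
    have hrR : z y / z x ∈ R := ⟨z, hz, rfl⟩
    have : z y / z x ≤ sSup R := le_csSup hRbdd hrR
    rw [div_le_iff₀ hzx'] at this
    nlinarith
  rw [funkM]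
  exact le_antisymm le₂ le₁
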